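/- arXiv:1811.07606 — 2 statements merged into one kernel-verified Lean document; each statement's English description precedes it below -/
import Mathlib

section
/- Let X be a topological space and Y ⊆ X. Then Y is B₁*-embedded in X if and only if every pair of subsets of Y that are completely separated in Y by B₁(Y) are also completely separated in X by B₁(X). -/
/-- A function between topological spaces is *Baire one* if it is the pointwise
limit of a sequence of continuous functions. -/
def IsBaireOne {X Y : Type*} [TopologicalSpace X] [TopologicalSpace Y] (f : X → Y) : Prop :=
  ∃ F : ℕ → X → Y, (∀ n, Continuous (F n)) ∧
    ∀ x, Filter.Tendsto (fun n => F n x) Filter.atTop (nhds (f x))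

/-- Two subsets `A`, `B` of `S` are *completely separated by `B₁(S)`* if there is a
Baire one function `h : S → ℝ` with `0 ≤ h ≤ 1`, `h = 0` on `A` and `h = 1` on `B`. -/
def CompletelySeparatedB1 {S : Type*} [TopologicalSpace S] (A B : Set S) : Prop :=
  ∃ h : S → ℝ, IsBaireOne h ∧ (∀ x, 0 ≤ h x ∧ h x ≤ 1) ∧
    (∀ x ∈ A, h x = 0) ∧ (∀ x ∈ B, h x = 1)

/-- `Y` is *B₁*-embedded* in `X` if every bounded Baire one function on the subspace `Y`
extends to a bounded Baire one function on `X`. -/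
def B1StarEmbedded {X : Type*} [TopologicalSpace X] (Y : Set X) : Prop :=
  ∀ f : Y → ℝ, IsBaireOne f → (∃ M : ℝ, ∀ y : Y, |f y| ≤ M) →
    ∃ g : X → ℝ, IsBaireOne g ∧ (∃ M : ℝ, ∀ x : X, |g x| ≤ M) ∧ ∀ y : Y, g y = f y

open Filter Topology

section Aux

variable {X : Type*} [TopologicalSpace X]

lemma IsBaireOne.compLeft {f : X → ℝ} (hf : IsBaireOne f) {φ : ℝ → ℝ} (hφ : Continuous φ) :
    IsBaireOne (fun x => φ (f x)) := by
  obtain ⟨F, hFc, hFt⟩ := hf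
  exact ⟨fun n x => φ (F n x), fun n => hφ.comp (hFc n),
    fun x => (hφ.tendsto _).comp (hFt x)⟩

lemma IsBaireOne.restrictSet {Y : Set X} {g : X → ℝ} (hg : IsBaireOne g) :
    IsBaireOne (fun y : Y => g y) := by
  obtain ⟨F, hFc, hFt⟩ := hg
  exact ⟨fun n y => F n y, fun n => (hFc n).comp continuous_subtype_val,
    fun y => hFt y⟩

lemma IsBaireOne.sub' {f g : X → ℝ} (hf : IsBaireOne f) (hg : IsBaireOne g) :
    IsBaireOne (fun x => f x - g x) := by
  obtain ⟨F, hFc, hFt⟩ := hf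
  obtain ⟨G, hGc, hGt⟩ := hg
  exact ⟨fun n x => F n x - G n x, fun n => (hFc n).sub (hGc n),
    fun x => (hFt x).sub (hGt x)⟩

set_option maxHeartbeats 800000 in
/-- A pointwise sum of Baire one functions with summable uniform bounds is Baire one. -/
lemma isBaireOne_tsum (g : ℕ → X → ℝ) (r : ℕ → ℝ)
    (hg : ∀ n, IsBaireOne (g n)) (hb : ∀ n x, |g n x| ≤ r n) (hr0 : ∀ n, 0 ≤ r n)
    (hr : Summable r) : IsBaireOne (fun x => ∑' n, g n x) := by
  choose F hFc hFt using hg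
  -- clamp the approximants to the bound `r n`
  set C : ℕ → ℕ → X → ℝ := fun n m x => max (-(r n)) (min (r n) (F n m x)) with hC
  have hCc : ∀ n m, Continuous (C n m) :=
    fun n m => continuous_const.max (continuous_const.min (hFc n m))
  have hCb : ∀ n m x, |C n m x| ≤ r n := by
    intro n m x
    rw [abs_le]
    refine ⟨le_max_left _ _, max_le (neg_le_self (hr0 n)) (min_le_left _ _)⟩
  have hCt : ∀ n x, Tendsto (fun m => C n m x) atTop (𝓝 (g n x)) := by
    intro n x
    have hcont : Continuous fun t : ℝ => max (-(r n)) (min (r n) t) :=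
      continuous_const.max (continuous_const.min continuous_id)
    have := (hcont.tendsto (g n x)).comp (hFt n x)
    have habs := abs_le.1 (hb n x)
    simpa [max_eq_right habs.1, min_eq_right habs.2, Function.comp_def] using this
  -- summability facts
  have hsums : ∀ x, Summable (fun n => g n x) := by
    intro x
    refine Summable.of_abs (hr.of_nonneg_of_le (fun n => abs_nonneg _) (fun n => hb n x))
  refine ⟨fun m x => ∑ n ∈ Finset.range (m + 1), C n m x,
    fun m => continuous_finset_sum _ (fun n _ => hCc n m), ?_⟩
  intro x
  rw [Metric.tendsto_atTop]
  intro ε hε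
  -- choose K with tail < ε/3
  have htail : Tendsto (fun K => ∑' j, r (j + K)) atTop (𝓝 0) := tendsto_sum_nat_add r
  obtain ⟨K, hK⟩ := (Metric.tendsto_atTop.1 htail) (ε / 3) (by linarith)
  have hTK : ∑' j, r (j + K) < ε / 3 := by
    have := hK K le_rfl
    rw [Real.dist_eq, sub_zero] at this
    exact lt_of_abs_lt this
  have hTK0 : 0 ≤ ∑' j, r (j + K) :=
    tsum_nonneg (fun j => hr0 _)
  -- the head error tends to 0
  have hhead : Tendsto (fun m => ∑ n ∈ Finset.range K, |C n m x - g n x|) atTop (𝓝 0) := by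
    have : ∀ n ∈ Finset.range K,
        Tendsto (fun m => |C n m x - g n x|) atTop (𝓝 0) := by
      intro n _
      have h1 : Tendsto (fun m => C n m x - g n x) atTop (𝓝 (g n x - g n x)) :=
        (hCt n x).sub tendsto_const_nhds
      rw [sub_self] at h1
      simpa [Function.comp_def] using (continuous_abs.tendsto 0).comp h1
    simpa using tendsto_finset_sum (Finset.range K) this
  obtain ⟨N, hN⟩ := (Metric.tendsto_atTop.1 hhead) (ε / 3) (by linarith)
  refine ⟨max N K, fun m hm => ?_⟩
  have hmN : N ≤ m := le_trans (le_max_left _ _) hm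
  have hmK : K ≤ m := le_trans (le_max_right _ _) hm
  have hhd : ∑ n ∈ Finset.range K, |C n m x - g n x| < ε / 3 := by
    have h2 := hN m hmN
    rw [Real.dist_eq, sub_zero] at h2
    exact lt_of_abs_lt h2
  -- decompose the sums
  have hsummK : Summable (fun j => r (j + K)) := (summable_nat_add_iff K).2 hr
  have hsplit : (∑' n, g n x) =
      (∑ n ∈ Finset.range K, g n x) + ∑' j, g (j + K) x :=
    ((hsums x).sum_add_tsum_nat_add K).symm
  have hGsplit : (∑ n ∈ Finset.range (m + 1), C n m x) =
      (∑ n ∈ Finset.range K, C n m x) + ∑ n ∈ Finset.Ico K (m + 1), C n m x := by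
    rw [Finset.range_eq_Ico, ← Finset.sum_Ico_consecutive _ (Nat.zero_le K) (by omega),
      ← Finset.range_eq_Ico]
  have hbd2 : |∑ n ∈ Finset.Ico K (m + 1), C n m x| ≤ ∑' j, r (j + K) := by
    calc |∑ n ∈ Finset.Ico K (m + 1), C n m x|
        ≤ ∑ n ∈ Finset.Ico K (m + 1), |C n m x| := Finset.abs_sum_le_sum_abs _ _
      _ ≤ ∑ n ∈ Finset.Ico K (m + 1), r n := Finset.sum_le_sum (fun n _ => hCb n m x)
      _ = ∑ j ∈ Finset.range (m + 1 - K), r (K + j) := Finset.sum_Ico_eq_sum_range _ _ _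
      _ = ∑ j ∈ Finset.range (m + 1 - K), r (j + K) := by
          refine Finset.sum_congr rfl (fun j _ => by rw [Nat.add_comm])
      _ ≤ ∑' j, r (j + K) := Summable.sum_le_tsum _ (fun j _ => hr0 _) hsummK
  have hbd3 : |∑' j, g (j + K) x| ≤ ∑' j, r (j + K) := by
    have habs : Summable (fun j => |g (j + K) x|) :=
      hsummK.of_nonneg_of_le (fun j => abs_nonneg _) (fun j => hb _ x)
    calc |∑' j, g (j + K) x| ≤ ∑' j, |g (j + K) x| :=
          norm_tsum_le_tsum_norm (f := fun j => g (j + K) x) (E := ℝ) habs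
      _ ≤ ∑' j, r (j + K) := Summable.tsum_le_tsum (fun j => hb _ x) habs hsummK
  have key : (∑ n ∈ Finset.range (m + 1), C n m x) - ∑' n, g n x =
      (∑ n ∈ Finset.range K, (C n m x - g n x))
        + (∑ n ∈ Finset.Ico K (m + 1), C n m x) - ∑' j, g (j + K) x := by
    rw [hGsplit, hsplit, Finset.sum_sub_distrib]; ring
  rw [Real.dist_eq, key]
  have h1 : |∑ n ∈ Finset.range K, (C n m x - g n x)| ≤
      ∑ n ∈ Finset.range K, |C n m x - g n x| := Finset.abs_sum_le_sum_abs _ _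
  set s1 := ∑ n ∈ Finset.range K, (C n m x - g n x) with hs1
  set s2 := ∑ n ∈ Finset.Ico K (m + 1), C n m x with hs2
  set t := ∑' j, g (j + K) x with ht
  have e1 : |s1| < ε / 3 := lt_of_le_of_lt h1 hhd
  have e2 : |s2| ≤ ε / 3 := hbd2.trans hTK.le
  have e3 : |t| ≤ ε / 3 := hbd3.trans hTK.le
  have h4 : |s1 + s2 - t| ≤ |s1| + |s2| + |t| := by
    calc |s1 + s2 - t| = |s1 + s2 + -t| := by rw [sub_eq_add_neg]
      _ ≤ |s1 + s2| + |-t| := abs_add_le _ _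
      _ ≤ |s1| + |s2| + |-t| := add_le_add_left (abs_add_le _ _) _
      _ = |s1| + |s2| + |t| := by rw [abs_neg]
  linarith

variable {Y : Set X}

/-- Key approximation step: assuming the separation hypothesis, a Baire one function on `Y`
bounded by `3c` admits a Baire one function on `X` bounded by `c` approximating it within `2c`. -/
lemma key_step
    (hyp : ∀ A B : Set Y, CompletelySeparatedB1 A B →
        CompletelySeparatedB1 ((↑) '' A : Set X) ((↑) '' B : Set X))
    (φ : Y → ℝ) (c : ℝ) :
    ∃ g : X → ℝ, (IsBaireOne φ ∧ 0 < c ∧ ∀ y, |φ y| ≤ 3 * c) →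
      IsBaireOne g ∧ (∀ x, |g x| ≤ c) ∧ ∀ y : Y, |φ y - g y| ≤ 2 * c := by
  by_cases hcond : IsBaireOne φ ∧ 0 < c ∧ ∀ y, |φ y| ≤ 3 * c
  swap
  · exact ⟨0, fun h => absurd h hcond⟩
  obtain ⟨hφ, hc, hφb⟩ := hcond
  set A : Set Y := {y | φ y ≤ -c} with hA
  set B : Set Y := {y | c ≤ φ y} with hB
  have hsep : CompletelySeparatedB1 A B := by
    refine ⟨fun y => min 1 (max 0 ((φ y + c) / (2 * c))), ?_, ?_, ?_, ?_⟩
    · refine hφ.compLeft (φ := fun t => min 1 (max 0 ((t + c) / (2 * c)))) ?_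
      exact continuous_const.min (continuous_const.max (by fun_prop))
    · intro y
      constructor
      · exact le_min zero_le_one (le_max_left _ _)
      · exact min_le_left _ _
    · intro y hy
      have hy' : φ y ≤ -c := hy
      have h1 : (φ y + c) / (2 * c) ≤ 0 :=
        div_nonpos_of_nonpos_of_nonneg (by linarith) (by linarith)
      show min 1 (max 0 ((φ y + c) / (2 * c))) = 0
      rw [max_eq_left h1, min_eq_right zero_le_one]
    · intro y hy
      have hy' : c ≤ φ y := hy
      have h1 : (1 : ℝ) ≤ (φ y + c) / (2 * c) := by
        rw [le_div_iff₀ (by linarith)]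
        linarith
      show min 1 (max 0 ((φ y + c) / (2 * c))) = 1
      rw [max_eq_right (le_trans zero_le_one h1), min_eq_left h1]
  obtain ⟨k, hkB1, hk01, hk0, hk1⟩ := hyp A B hsep
  refine ⟨fun x => c * (2 * k x - 1), fun _ => ?_⟩
  refine ⟨hkB1.compLeft (φ := fun t => c * (2 * t - 1)) (by continuity), ?_, ?_⟩
  · intro x
    have h := hk01 x
    rw [abs_mul, abs_of_pos hc]
    have : |2 * k x - 1| ≤ 1 := abs_le.2 ⟨by linarith [h.1], by linarith [h.2]⟩
    nlinarith
  · intro y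
    show |φ y - c * (2 * k ↑y - 1)| ≤ 2 * c
    by_cases hyA : φ y ≤ -c
    · have hk : k ↑y = 0 := hk0 _ ⟨y, hyA, rfl⟩
      rw [hk]
      have := abs_le.1 (hφb y)
      rw [abs_le]; constructor <;> nlinarith [this.1, this.2]
    · by_cases hyB : c ≤ φ y
      · have hk : k ↑y = 1 := hk1 _ ⟨y, hyB, rfl⟩
        rw [hk]
        have := abs_le.1 (hφb y)
        rw [abs_le]; constructor <;> nlinarith [this.1, this.2]
      · push_neg at hyA hyB
        have h := hk01 (↑y : X)
        rw [abs_le]; constructor <;> nlinarith [h.1, h.2]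

end Aux

theorem b1StarEmbedded_iff_completelySeparated {X : Type*} [TopologicalSpace X] (Y : Set X) :
    B1StarEmbedded Y ↔
      ∀ A B : Set Y, CompletelySeparatedB1 A B →
        CompletelySeparatedB1 ((↑) '' A : Set X) ((↑) '' B : Set X) := by
  constructor
  · -- easy direction
    intro hemb A B ⟨h, hB1, hb, hA0, hB1'⟩
    obtain ⟨g, hgB1, -, hgy⟩ := hemb h hB1 ⟨1, fun y => abs_le.2 ⟨by linarith [(hb y).1], (hb y).2⟩⟩
    refine ⟨fun x => min 1 (max 0 (g x)),
      hgB1.compLeft (φ := fun t => min 1 (max 0 t))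
        (continuous_const.min (continuous_const.max continuous_id)), ?_, ?_, ?_⟩
    · intro x
      exact ⟨le_min zero_le_one (le_max_left _ _), min_le_left _ _⟩
    · rintro x ⟨y, hy, rfl⟩
      show min 1 (max 0 (g ↑y)) = 0
      rw [hgy y, hA0 y hy]
      simp
    · rintro x ⟨y, hy, rfl⟩
      show min 1 (max 0 (g ↑y)) = 1
      rw [hgy y, hB1' y hy]
      simp
  · -- hard direction: Tietze-style extension
    intro hyp f hf ⟨M, hMb⟩
    -- geometric bounds
    set c : ℕ → ℝ := fun n => max M 1 / 3 * (2 / 3) ^ n with hc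
    have hc0 : ∀ n, 0 < c n := by
      intro n
      have h1 : (0:ℝ) < max M 1 := lt_of_lt_of_le one_pos (le_max_right _ _)
      positivity
    have hcsum : Summable c := by
      exact (summable_geometric_of_lt_one (by norm_num) (by norm_num)).mul_left _
    have hcsucc : ∀ n, 2 * c n = 3 * c (n + 1) := by
      intro n
      simp only [hc, pow_succ]
      ring
    -- picking functions via the key step
    choose pick hpick using fun (φ : Y → ℝ) (cc : ℝ) => key_step hyp φ cc
    -- the recursive sequence of remainders
    set fseq : ℕ → Y → ℝ :=
      fun n => Nat.rec f (fun n fn y => fn y - pick fn (c n) ↑y) n with hfseq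
    have hstep : ∀ n (y : Y), fseq (n + 1) y = fseq n y - pick (fseq n) (c n) ↑y :=
      fun n y => rfl
    -- the invariant
    have hinv : ∀ n, IsBaireOne (fseq n) ∧ ∀ y, |fseq n y| ≤ 3 * c n := by
      intro n
      induction n with
      | zero =>
        refine ⟨hf, fun y => ?_⟩
        have : M ≤ 3 * c 0 := by
          simp only [hc, pow_zero, mul_one]
          have := le_max_left M 1
          linarith
        exact (hMb y).trans this
      | succ n ih =>
        obtain ⟨ihB1, ihb⟩ := ih
        obtain ⟨hgB1, hgb, hga⟩ := hpick (fseq n) (c n) ⟨ihB1, hc0 n, ihb⟩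
        constructor
        · have : IsBaireOne (fun y : Y => pick (fseq n) (c n) ↑y) := hgB1.restrictSet
          exact ihB1.sub' this
        · intro y
          rw [hstep n y]
          calc |fseq n y - pick (fseq n) (c n) ↑y| ≤ 2 * c n := hga y
            _ = 3 * c (n + 1) := hcsucc n
    -- properties of the picked functions
    have hgprops : ∀ n, IsBaireOne (pick (fseq n) (c n)) ∧
        (∀ x, |pick (fseq n) (c n) x| ≤ c n) ∧
        ∀ y : Y, |fseq n y - pick (fseq n) (c n) ↑y| ≤ 2 * c n := by
      intro n
      exact hpick (fseq n) (c n) ⟨(hinv n).1, hc0 n, (hinv n).2⟩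
    set gs : ℕ → X → ℝ := fun n => pick (fseq n) (c n) with hgs
    -- the extension
    refine ⟨fun x => ∑' n, gs n x, ?_, ?_, ?_⟩
    · exact isBaireOne_tsum gs c (fun n => (hgprops n).1) (fun n x => (hgprops n).2.1 x)
        (fun n => (hc0 n).le) hcsum
    · refine ⟨∑' n, c n, fun x => ?_⟩
      have habs : Summable (fun n => |gs n x|) :=
        hcsum.of_nonneg_of_le (fun n => abs_nonneg _) (fun n => (hgprops n).2.1 x)
      calc |∑' n, gs n x| ≤ ∑' n, |gs n x| :=
            norm_tsum_le_tsum_norm (f := fun n => gs n x) (E := ℝ) habs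
        _ ≤ ∑' n, c n := Summable.tsum_le_tsum (fun n => (hgprops n).2.1 x) habs hcsum
    · intro y
      -- partial sums equal f y - fseq m y
      have hpartial : ∀ m, ∑ n ∈ Finset.range m, gs n ↑y = f y - fseq m y := by
        intro m
        induction m with
        | zero => simp [hfseq]
        | succ m ih =>
          rw [Finset.sum_range_succ, ih, hstep m y]
          ring
      have hrem : Tendsto (fun m => fseq m y) atTop (𝓝 0) := by
        refine squeeze_zero_norm (a := fun m => 3 * c m) (fun m => (hinv m).2 y) ?_
        have h1 : Tendsto (fun m : ℕ => ((2:ℝ) / 3) ^ m) atTop (𝓝 0) :=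
          tendsto_pow_atTop_nhds_zero_of_lt_one (by norm_num) (by norm_num)
        have h2 := h1.const_mul (3 * (max M 1 / 3))
        simp only [mul_zero] at h2
        have heq : (fun m => 3 * c m) = fun m : ℕ => 3 * (max M 1 / 3) * (2 / 3) ^ m := by
          funext m; simp only [hc]; ring
        rw [heq]
        exact h2
      have hsummy : Summable (fun n => gs n ↑y) :=
        Summable.of_abs (hcsum.of_nonneg_of_le (fun n => abs_nonneg _)
          (fun n => (hgprops n).2.1 ↑y))
      have hHS : HasSum (fun n => gs n ↑y) (f y) := by
        rw [hsummy.hasSum_iff_tendsto_nat]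
        have : Tendsto (fun m => f y - fseq m y) atTop (𝓝 (f y - 0)) :=
          tendsto_const_nhds.sub hrem
        simpa [hpartial] using this
      exact hHS.tsum_eq
end

section
/- Let X be a topological space and Y ⊆ X a B₁-embedded subset of X. Then for every Baire one function f : X → ℝ whose zero set Z(f) is disjoint from Y, the sets Y and Z(f) are completely separated in X by B₁(X). -/
/-- `Y` is *B₁-embedded* in `X` if every Baire one function on the subspace `Y`
extends to a Baire one function on `X`. -/
def B1Embedded {X : Type*} [TopologicalSpace X] (Y : Set X) : Prop :=
  ∀ f : Y → ℝ, IsBaireOne f → ∃ g : X → ℝ, IsBaireOne g ∧ ∀ y : Y, g y = f y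

theorem b1Embedded_completelySeparated_from_disjoint_zeroSet
    {X : Type*} [TopologicalSpace X] (Y : Set X) (hY : B1Embedded Y)
    (f : X → ℝ) (hf : IsBaireOne f) (hdisj : {x : X | f x = 0} ∩ Y = ∅) :
    CompletelySeparatedB1 Y {x : X | f x = 0} := by
  classical
  obtain ⟨F, hFc, hFt⟩ := hf
  have hfy : ∀ y : Y, f y ≠ 0 := by
    intro y hy
    have : (y : X) ∈ {x : X | f x = 0} ∩ Y := ⟨hy, y.2⟩
    rw [hdisj] at this
    exact this
  -- `1/f²` is Baire one on `Y`
  have hu : IsBaireOne (fun y : Y => ((f y) ^ 2)⁻¹) := by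
    refine ⟨fun n y => (max ((F n y) ^ 2) (1 / (n + 1)))⁻¹, ?_, ?_⟩
    · intro n
      refine Continuous.inv₀ ((((hFc n).comp continuous_subtype_val).pow 2).max
        continuous_const) ?_
      intro y
      have h1 : (0 : ℝ) < 1 / (n + 1) := by positivity
      exact ne_of_gt (lt_of_lt_of_le h1 (le_max_right _ _))
    · intro y
      have h1 : Filter.Tendsto (fun n : ℕ => max ((F n y) ^ 2) (1 / (n + 1) : ℝ))
          Filter.atTop (nhds (max ((f y) ^ 2) 0)) :=
        ((hFt y).pow 2).max tendsto_one_div_add_atTop_nhds_zero_nat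
      rw [max_eq_left (by positivity)] at h1
      exact h1.inv₀ (pow_ne_zero 2 (hfy y))
  obtain ⟨g, ⟨G, hGc, hGt⟩, hgy⟩ := hY _ hu
  set p : X → ℝ := fun x => (f x) ^ 2 * g x with hp
  have hpB : IsBaireOne p := by
    refine ⟨fun n x => (F n x) ^ 2 * G n x, fun n => ((hFc n).pow 2).mul (hGc n), ?_⟩
    intro x
    exact ((hFt x).pow 2).mul (hGt x)
  have hpY : ∀ y : Y, p y = 1 := by
    intro y
    have := hgy y
    simp only [hp, this]
    field_simp
    exact div_self (hfy y)
  have hpZ : ∀ x ∈ {x : X | f x = 0}, p x = 0 := by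
    intro x hx
    simp only [hp, Set.mem_setOf_eq.mp hx]
    ring
  -- clamp
  set h : X → ℝ := fun x => 1 - min (max (p x) 0) 1 with hh
  refine ⟨h, ?_, ?_, ?_, ?_⟩
  · obtain ⟨P, hPc, hPt⟩ := hpB
    refine ⟨fun n x => 1 - min (max (P n x) 0) 1,
      fun n => continuous_const.sub (((hPc n).max continuous_const).min continuous_const), ?_⟩
    intro x
    exact Filter.Tendsto.const_sub _ (((hPt x).max tendsto_const_nhds).min tendsto_const_nhds)
  · intro x
    constructor
    · have : min (max (p x) 0) 1 ≤ 1 := min_le_right _ _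
      simp only [hh]; linarith
    · have h0 : (0:ℝ) ≤ min (max (p x) 0) 1 := le_min (le_max_right _ _) zero_le_one
      simp only [hh]; linarith
  · intro x hx
    have := hpY ⟨x, hx⟩
    simp [hh, this]
  · intro x hx
    have := hpZ x hx
    simp [hh, this]
end
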